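/- Let S be a finite type, f : S → Bool → S, s₀ ∈ S and F ⊆ S, where the action of a word w : List Bool on a state s is s · w = List.foldl f s w. If for every state q ∈ S there is a word u with q · u ∈ F, then the set of sequences X : ℕ → Bool whose run never visits an accepting state (i.e., r n ∉ F for all n, where r 0 = s₀ and r (n+1) = f (r n) (X n)) has μ-measure zero. -/

import Mathlib

open MeasureTheory Filter

/-- The fair-coin product probability measure on Cantor space `ℕ → Bool`,
constructed as the pushforward of Lebesgue measure on `[0,1)` under binary expansion. -/
noncomputable def mu : Measure (ℕ → Bool) :=
  Measure.map (fun x n => decide (⌊x * 2 ^ (n + 1)⌋ % 2 = 1))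
    (volume.restrict (Set.Ico (0 : ℝ) 1))

/-- Action of a word on a state of an automaton. -/
def act {S A : Type*} (f : S → A → S) (s : S) (w : List A) : S := w.foldl f s

/-- The run of a sequence `X` on the machine `(S, f, s₀)`. -/
def run {S : Type*} (f : S → Bool → S) (s₀ : S) (X : ℕ → Bool) : ℕ → S
  | 0 => s₀
  | n + 1 => f (run f s₀ X n) (X n)

/-- `t` is reachable from `s`. -/
def Reach {S : Type*} (f : S → Bool → S) (s t : S) : Prop := ∃ w : List Bool, act f s w = t

/-- The connected component of a state `s`. -/
def component {S : Type*} (f : S → Bool → S) (s : S) : Set S :=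
  {t | Reach f s t ∧ Reach f t s}

/-- `g` is a leaf connected component. -/
def IsLeafComponent {S : Type*} (f : S → Bool → S) (g : Set S) : Prop :=
  (∃ s, g = component f s) ∧ ∀ s ∈ g, ∀ t, Reach f s t → Reach f t s

/-- The word `w` occurs as a subword of the sequence `X`. -/
def Occurs (w : List Bool) (X : ℕ → Bool) : Prop :=
  ∃ n, ∀ k < w.length, X (n + k) = w.getD k false

/-- `X` is disjunctive: every word occurs in `X` as a subword. -/
def Disjunctive (X : ℕ → Bool) : Prop := ∀ w : List Bool, Occurs w X

/-- The word `w` is a prefix of the sequence `X`. -/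
def IsPrefixOfSeq (w : List Bool) (X : ℕ → Bool) : Prop :=
  ∀ k < w.length, X k = w.getD k false

/-- `[L]`: the set of sequences having some prefix in the language `L`. -/
def cyl (L : Set (List Bool)) : Set (ℕ → Bool) := {X | ∃ w ∈ L, IsPrefixOfSeq w X}

/-- `I(X)`: the set of states visited infinitely often by the run of `X`. -/
def InfOcc {S : Type*} (f : S → Bool → S) (s₀ : S) (X : ℕ → Bool) : Set S :=
  {s | ∃ᶠ n in atTop, run f s₀ X n = s}

/-- `X` is accepted by the deterministic Büchi automaton `(S, f, s₀, F)`. -/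
def BuchiAccepts {S : Type*} (f : S → Bool → S) (s₀ : S) (F : Set S) (X : ℕ → Bool) : Prop :=
  ∃ᶠ n in atTop, run f s₀ X n ∈ F

/-- A language is regular if it is accepted by a DFA with finitely many states. -/
def Regular {A : Type} (L : Set (List A)) : Prop :=
  ∃ (S : Type) (_ : Fintype S) (f : S → A → S) (s₀ : S) (F : Set S),
    L = {w | act f s₀ w ∈ F}

/-- The convolution of two words. -/
def conv (x i : List Bool) : List (Option Bool × Option Bool) :=
  (List.range (max x.length i.length)).map (fun k => (x[k]?, i[k]?))

/-- `(I, U)` is an automatic family. -/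
def IsAutomaticFamily (I : Set (List Bool)) (U : List Bool → Set (List Bool)) : Prop :=
  Regular I ∧ Regular {c | ∃ i ∈ I, ∃ x ∈ U i, c = conv x i}

/-- `(I, U)` is an automatic randomness test (ART). -/
def IsART (I : Set (List Bool)) (U : List Bool → Set (List Bool)) : Prop :=
  IsAutomaticFamily I U ∧ ∀ ε : ENNReal, 0 < ε → ∃ i ∈ I, mu (cyl (U i)) ≤ ε

/-- `(I, U)` is a Martin-Löf automatic randomness test (MART). -/
def IsMART (I : Set (List Bool)) (U : List Bool → Set (List Bool)) : Prop :=
  IsAutomaticFamily I U ∧ I.Infinite ∧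
    ∀ i ∈ I, mu (cyl (U i)) ≤ (2 : ENNReal) ^ (-(i.length : ℤ))

/-- The covering region `F(I, U)` of a test. -/
def coverRegion (I : Set (List Bool)) (U : List Bool → Set (List Bool)) : Set (ℕ → Bool) :=
  ⋂ i ∈ I, cyl (U i)


-- ===== auxiliary lemmas for stmt0 =====

private lemma digi_eq_testBit {x : ℝ} (hx : x ∈ Set.Ico (0:ℝ) 1) {j n : ℕ} (hj : j < n) :
    (decide (⌊x * 2 ^ (j + 1)⌋ % 2 = 1)) = (⌊x * 2 ^ n⌋₊).testBit (n - 1 - j) := by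
  have h0 : (0:ℝ) ≤ x := hx.1
  have hpos : (0:ℝ) ≤ x * 2 ^ (j+1) := by positivity
  have hdiv : x * 2 ^ (j+1) = (x * 2 ^ n) / ((2 ^ (n-1-j) : ℕ) : ℝ) := by
    rw [eq_div_iff (by positivity)]
    push_cast
    rw [mul_assoc, ← pow_add]
    congr 2
    omega
  have hfl : ⌊x * 2 ^ (j+1)⌋₊ = ⌊x * 2 ^ n⌋₊ / 2 ^ (n-1-j) := by
    rw [hdiv, Nat.floor_div_natCast]
  have hint : ⌊x * 2 ^ (j+1)⌋ = ((⌊x * 2 ^ (j+1)⌋₊ : ℕ) : ℤ) :=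
    (Int.natCast_floor_eq_floor hpos).symm
  rw [hint, Nat.testBit_eq_decide_div_mod_eq, hfl]
  simp only [decide_eq_decide]
  constructor
  · intro h; exact_mod_cast h
  · intro h; exact_mod_cast h

private lemma natFloor_eq_of_digi_eq {x y : ℝ} (hx : x ∈ Set.Ico (0:ℝ) 1)
    (hy : y ∈ Set.Ico (0:ℝ) 1) {n : ℕ}
    (h : ∀ j < n, (decide (⌊x * 2 ^ (j + 1)⌋ % 2 = 1)) = (decide (⌊y * 2 ^ (j + 1)⌋ % 2 = 1))) :
    ⌊x * 2 ^ n⌋₊ = ⌊y * 2 ^ n⌋₊ := by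
  apply Nat.eq_of_testBit_eq
  intro i
  by_cases hi : i < n
  · have hj : n - 1 - (n - 1 - i) = i := by omega
    have h2 := h (n-1-i) (by omega)
    rw [digi_eq_testBit hx (show n-1-i < n by omega),
      digi_eq_testBit hy (show n-1-i < n by omega), hj] at h2
    exact h2
  · have key : ∀ z : ℝ, z ∈ Set.Ico (0:ℝ) 1 → (⌊z * 2 ^ n⌋₊).testBit i = false := by
      intro z hz
      apply Nat.testBit_eq_false_of_lt
      calc ⌊z * 2 ^ n⌋₊ < 2 ^ n := by
            have hz0 := hz.1
            rw [Nat.floor_lt (by positivity)]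
            push_cast
            nlinarith [hz.2, (show (0:ℝ) < 2 ^ n by positivity)]
        _ ≤ 2 ^ i := Nat.pow_le_pow_right (by norm_num) (by omega)
    rw [key x hx, key y hy]

private lemma phi_measurable :
    Measurable (fun (x : ℝ) (n : ℕ) => decide (⌊x * 2 ^ (n + 1)⌋ % 2 = 1)) := by
  apply measurable_pi_lambda
  intro n
  exact Measurable.comp (f := fun x : ℝ => ⌊x * 2 ^ (n+1)⌋)
    (g := fun z : ℤ => decide (z % 2 = 1)) measurable_from_top
    ((measurable_id.mul_const _).floor)

private lemma mu_cyl_le (n : ℕ) (v : Fin n → Bool) :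
    mu {X : ℕ → Bool | ∀ i : Fin n, X i = v i} ≤ 2⁻¹ ^ n := by
  have hC : MeasurableSet {X : ℕ → Bool | ∀ i : Fin n, X i = v i} := by
    have : {X : ℕ → Bool | ∀ i : Fin n, X i = v i}
        = ⋂ i : Fin n, (fun X : ℕ → Bool => X i) ⁻¹' {v i} := by
      ext X; simp [Set.mem_iInter]
    rw [this]
    exact MeasurableSet.iInter fun i => (measurable_pi_apply (i : ℕ)) (measurableSet_singleton _)
  rw [mu, Measure.map_apply phi_measurable hC, Measure.restrict_apply (phi_measurable hC)]
  set P := (fun (x : ℝ) (n : ℕ) => decide (⌊x * 2 ^ (n + 1)⌋ % 2 = 1)) ⁻¹'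
      {X : ℕ → Bool | ∀ i : Fin n, X i = v i} ∩ Set.Ico (0:ℝ) 1 with hP
  rcases Set.eq_empty_or_nonempty P with he | ⟨x₀, hx₀⟩
  · rw [he]; simp
  · set N := ⌊x₀ * 2 ^ n⌋₊ with hN
    have hsub : P ⊆ Set.Ico ((N : ℝ) / 2 ^ n) ((N + 1 : ℝ) / 2 ^ n) := by
      intro x hx
      have hfl : ⌊x * 2 ^ n⌋₊ = N := by
        apply natFloor_eq_of_digi_eq hx.2 hx₀.2
        intro j hj
        have h1 := hx.1; have h2 := hx₀.1
        simp only [Set.mem_preimage, Set.mem_setOf_eq] at h1 h2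
        exact (h1 ⟨j, hj⟩).trans (h2 ⟨j, hj⟩).symm
      have h0 : (0:ℝ) ≤ x := hx.2.1
      have hle : (N : ℝ) ≤ x * 2 ^ n := by
        rw [← hfl]; exact Nat.floor_le (by positivity)
      have hlt : x * 2 ^ n < (N : ℝ) + 1 := by
        rw [← hfl]; exact Nat.lt_floor_add_one _
      constructor
      · rw [div_le_iff₀ (by positivity)]; linarith
      · rw [lt_div_iff₀ (by positivity)]; linarith
    calc volume P ≤ volume (Set.Ico ((N : ℝ) / 2 ^ n) ((N + 1 : ℝ) / 2 ^ n)) :=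
          measure_mono hsub
      _ = ENNReal.ofReal ((N + 1 : ℝ) / 2 ^ n - (N : ℝ) / 2 ^ n) := Real.volume_Ico
      _ = ENNReal.ofReal ((2:ℝ)⁻¹ ^ n) := by congr 1; field_simp; rw [← mul_pow]; norm_num
      _ = 2⁻¹ ^ n := by
          rw [ENNReal.ofReal_pow (by norm_num)]
          congr 1
          rw [ENNReal.ofReal_inv_of_pos (by norm_num)]
          norm_num

private lemma act_append {S A : Type*} (f : S → A → S) (s : S) (w₁ w₂ : List A) :
    act f s (w₁ ++ w₂) = act f (act f s w₁) w₂ := List.foldl_append ..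

private lemma run_eq_act {S : Type*} (f : S → Bool → S) (s₀ : S) (X : ℕ → Bool) (m : ℕ) :
    run f s₀ X m = act f s₀ (List.ofFn fun i : Fin m => X i) := by
  induction m with
  | zero => rfl
  | succ m ih =>
    rw [List.ofFn_succ']
    show f (run f s₀ X m) (X m) = act f s₀ (List.concat _ _)
    rw [act, List.concat_eq_append, List.foldl_append, ih]
    simp [act, Fin.last]

private lemma ofFn_take {α : Type*} {n : ℕ} (v : Fin n → α) (m : ℕ) :
    (List.ofFn v).take m
      = List.ofFn (fun i : Fin (min m n) => v ⟨i, lt_of_lt_of_le i.2 (min_le_right m n)⟩) := by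
  apply List.ext_getElem
  · simp
  · intro i h1 h2
    simp [List.getElem_take, List.getElem_ofFn]

open Classical in
private lemma card_step {S : Type} [Fintype S] (f : S → Bool → S) (s₀ : S) (F : Set S)
    (u : S → List Bool) (hu : ∀ q, act f q (u q) ∈ F) (L : ℕ)
    (hlen : ∀ q, (u q).length ≤ L) (m : ℕ) :
    (Finset.univ.filter fun v : Fin (m + L) → Bool =>
        ∀ t, act f s₀ ((List.ofFn v).take t) ∉ F).card ≤
      (2 ^ L - 1) *
      (Finset.univ.filter fun v : Fin m → Bool =>
        ∀ t, act f s₀ ((List.ofFn v).take t) ∉ F).card := by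
  classical
  set A := Finset.univ.filter fun v : Fin (m + L) → Bool =>
      ∀ t, act f s₀ ((List.ofFn v).take t) ∉ F with hA
  set B := Finset.univ.filter fun v : Fin m → Bool =>
      ∀ t, act f s₀ ((List.ofFn v).take t) ∉ F with hB
  have hproj : ∀ v : Fin (m + L) → Bool,
      List.ofFn (fun i : Fin m => v (Fin.castAdd L i)) = (List.ofFn v).take m := by
    intro v
    apply List.ext_getElem
    · simp
    · intro i h1 h2
      simp [List.getElem_take, List.getElem_ofFn, Fin.castAdd]
  have hmaps : ∀ v ∈ A, (fun i : Fin m => v (Fin.castAdd L i)) ∈ B := by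
    intro v hv
    rw [hA, Finset.mem_filter] at hv
    rw [hB, Finset.mem_filter]
    refine ⟨Finset.mem_univ _, fun t => ?_⟩
    rw [hproj, List.take_take]
    exact hv.2 _
  rw [Finset.card_eq_sum_card_fiberwise hmaps]
  have hfib : ∀ p ∈ B,
      (A.filter fun v => (fun i : Fin m => v (Fin.castAdd L i)) = p).card ≤ 2 ^ L - 1 := by
    intro p hp
    set q := act f s₀ (List.ofFn p) with hq
    set esc : Fin L → Bool := fun i => (u q ++ List.replicate L false).getD i false with hesc
    have hcard : (Finset.univ.erase esc).card = 2 ^ L - 1 := by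
      rw [Finset.card_erase_of_mem (Finset.mem_univ _), Finset.card_univ]
      simp [Fintype.card_fun]
    rw [← hcard]
    apply Finset.card_le_card_of_injOn (fun v => fun i : Fin L => v (Fin.natAdd m i))
    · intro v hv
      rw [Finset.mem_coe, Finset.mem_filter] at hv
      obtain ⟨hvA, hvp⟩ := hv
      rw [hA, Finset.mem_filter] at hvA
      refine Finset.mem_erase.2 ⟨?_, Finset.mem_univ _⟩
      intro hcontra
      apply hvA.2 (m + (u q).length)
      have hclaim : (List.ofFn v).take (m + (u q).length) = List.ofFn p ++ u q := by
        apply List.ext_getElem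
        · simp [hlen q]
        · intro i h1 h2
          simp only [List.getElem_take, List.getElem_ofFn]
          by_cases him : i < m
          · rw [List.getElem_append_left (by simpa using him)]
            have := congrFun hvp ⟨i, him⟩
            rw [List.getElem_ofFn]
            exact this
          · have hlen2 : (List.ofFn p).length = m := by simp
            rw [List.getElem_append_right (by omega)]
            have hj : i - (List.ofFn p).length < (u q).length := by
              simp at h2 ⊢; omega
            have := congrFun hcontra ⟨i - m, by have := hlen q; simp at h2; omega⟩
            simp only [hesc, Fin.natAdd] at this
            have hval : (⟨m + (i - m), by simp at h1 ⊢; omega⟩ : Fin (m + L))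
                = ⟨i, by simp at h1 ⊢; omega⟩ := by
              apply Fin.ext; simp; omega
            rw [hval] at this
            rw [this]
            rw [List.getD_eq_getElem _ _ (by simp; have := hlen q; simp at h2; omega)]
            rw [List.getElem_append_left (by simp at h2 ⊢; omega)]
            congr 1
            simp
      rw [hclaim, act_append, ← hq]
      exact hu q
    · intro v1 hv1 v2 hv2 hs
      rw [Finset.mem_coe, Finset.mem_filter] at hv1 hv2
      funext i
      refine Fin.addCases (fun j => ?_) (fun j => ?_) i
      · have := congrFun (hv1.2.trans hv2.2.symm) j
        simpa using this
      · exact congrFun hs j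
  calc ∑ p ∈ B, (A.filter fun v => (fun i : Fin m => v (Fin.castAdd L i)) = p).card
      ≤ ∑ _p ∈ B, (2 ^ L - 1) := Finset.sum_le_sum hfib
    _ = (2 ^ L - 1) * B.card := by rw [Finset.sum_const, smul_eq_mul, mul_comm]


/-- If from every state an accepting state is reachable, then the set of
sequences whose run never visits an accepting state has `mu`-measure zero. -/
theorem stmt0 {S : Type} [Fintype S] (f : S → Bool → S) (s₀ : S) (F : Set S)
    (h : ∀ q : S, ∃ u : List Bool, act f q u ∈ F) :
    mu {X : ℕ → Bool | ∀ n : ℕ, run f s₀ X n ∉ F} = 0 := by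
  classical
  choose u hu using h
  set L := Finset.univ.sup fun q : S => (u q).length with hL
  have hlen : ∀ q, (u q).length ≤ L := fun q =>
    Finset.le_sup (f := fun q : S => (u q).length) (Finset.mem_univ q)
  set Aset := {X : ℕ → Bool | ∀ n : ℕ, run f s₀ X n ∉ F} with hAset
  have hcount : ∀ k : ℕ,
      (Finset.univ.filter fun v : Fin (k * L) → Bool =>
        ∀ t, act f s₀ ((List.ofFn v).take t) ∉ F).card ≤ (2 ^ L - 1) ^ k := by
    intro k
    induction k with
    | zero =>
      rw [Nat.zero_mul, pow_zero]
      calc (Finset.univ.filter fun v : Fin 0 → Bool =>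
            ∀ t, act f s₀ ((List.ofFn v).take t) ∉ F).card
          ≤ (Finset.univ : Finset (Fin 0 → Bool)).card := Finset.card_filter_le _ _
        _ = 1 := by simp
    | succ k ih =>
      rw [Nat.succ_mul]
      calc (Finset.univ.filter fun v : Fin (k * L + L) → Bool =>
            ∀ t, act f s₀ ((List.ofFn v).take t) ∉ F).card
          ≤ (2 ^ L - 1) * (Finset.univ.filter fun v : Fin (k * L) → Bool =>
            ∀ t, act f s₀ ((List.ofFn v).take t) ∉ F).card :=
            card_step f s₀ F u hu L hlen (k * L)
        _ ≤ (2 ^ L - 1) * (2 ^ L - 1) ^ k := Nat.mul_le_mul_left _ ih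
        _ = (2 ^ L - 1) ^ (k + 1) := (pow_succ' _ _).symm
  have hmeas : ∀ n : ℕ, mu Aset ≤
      ((Finset.univ.filter fun v : Fin n → Bool =>
        ∀ t, act f s₀ ((List.ofFn v).take t) ∉ F).card : ENNReal) * 2⁻¹ ^ n := by
    intro n
    set V := Finset.univ.filter fun v : Fin n → Bool =>
        ∀ t, act f s₀ ((List.ofFn v).take t) ∉ F with hV
    have hsub : Aset ⊆ ⋃ v ∈ V, {X : ℕ → Bool | ∀ i : Fin n, X i = v i} := by
      intro X hX
      refine Set.mem_iUnion₂.2 ⟨fun i : Fin n => X i, ?_, fun i => rfl⟩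
      rw [hV, Finset.mem_filter]
      refine ⟨Finset.mem_univ _, fun t => ?_⟩
      rw [ofFn_take]
      exact (run_eq_act f s₀ X (min t n)) ▸ hX (min t n)
    calc mu Aset ≤ mu (⋃ v ∈ V, {X : ℕ → Bool | ∀ i : Fin n, X i = v i}) :=
          measure_mono hsub
      _ ≤ ∑ v ∈ V, mu {X : ℕ → Bool | ∀ i : Fin n, X i = v i} :=
          measure_biUnion_finset_le V _
      _ ≤ ∑ _v ∈ V, 2⁻¹ ^ n := Finset.sum_le_sum fun v _ => mu_cyl_le n v
      _ = (V.card : ENNReal) * 2⁻¹ ^ n := by rw [Finset.sum_const, nsmul_eq_mul]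
  set r : ENNReal := ((2 ^ L - 1 : ℕ) : ENNReal) * 2⁻¹ ^ L with hr
  have hfin : ∀ k : ℕ, mu Aset ≤ r ^ k := by
    intro k
    refine (hmeas (k * L)).trans ?_
    have hc : ((Finset.univ.filter fun v : Fin (k * L) → Bool =>
        ∀ t, act f s₀ ((List.ofFn v).take t) ∉ F).card : ENNReal)
        ≤ ((2 ^ L - 1 : ℕ) : ENNReal) ^ k := by
      rw [← Nat.cast_pow]
      exact_mod_cast hcount k
    calc _ ≤ ((2 ^ L - 1 : ℕ) : ENNReal) ^ k * 2⁻¹ ^ (k * L) :=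
          mul_le_mul_of_nonneg_right hc (by positivity)
      _ = r ^ k := by rw [hr, mul_pow, mul_comm k L, pow_mul]
  have hrlt : r < 1 := by
    have hrdiv : r = ((2 ^ L - 1 : ℕ) : ENNReal) / 2 ^ L := by
      rw [hr, div_eq_mul_inv, ENNReal.inv_pow]
    rw [hrdiv, ENNReal.div_lt_iff (Or.inl (pow_ne_zero _ two_ne_zero))
      (Or.inl (ENNReal.pow_ne_top ENNReal.ofNat_ne_top)), one_mul]
    have h2L : (2 : ENNReal) ^ L = ((2 ^ L : ℕ) : ENNReal) := by push_cast; ring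
    rw [h2L, Nat.cast_lt]
    exact Nat.sub_lt (Nat.pow_pos (by norm_num)) one_pos
  have hzero : mu Aset ≤ 0 :=
    ge_of_tendsto (ENNReal.tendsto_pow_atTop_nhds_zero_of_lt_one hrlt)
      (Filter.Eventually.of_forall hfin)
  exact le_antisymm hzero (by positivity)
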